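/- For any R ∈ (0,1], constants B, L with BL ≥ 1, and q ≥ 1: ∫₀^R sqrt(q log(6BL/ε)) dε ≤ 2√2 · R · √q · sqrt(log(6BL/R)). -/

import Mathlib

open MeasureTheory

lemma my_sqrt_add_le (a b : ℝ) (ha : 0 ≤ a) (hb : 0 ≤ b) :
    Real.sqrt (a + b) ≤ Real.sqrt a + Real.sqrt b := by
  have h := Real.sqrt_le_sqrt (show a + b ≤ (Real.sqrt a + Real.sqrt b)^2 by
    nlinarith [Real.sq_sqrt ha, Real.sq_sqrt hb, Real.sqrt_nonneg a, Real.sqrt_nonneg b])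
  rwa [Real.sqrt_sq (by positivity)] at h

theorem stmt11 (q : ℕ) (hq : 1 ≤ q) (B L R : ℝ) (hB : 0 < B) (hL : 0 < L)
    (hBL : 1 ≤ B * L) (hR0 : 0 < R) (hR1 : R ≤ 1) :
    (∫ ε in Set.Ioo (0 : ℝ) R, Real.sqrt (q * Real.log (6 * B * L / ε))) ≤
      2 * Real.sqrt 2 * R * Real.sqrt q * Real.sqrt (Real.log (6 * B * L / R)) := by
  set A := Real.log (6 * B * L / R) with hAdef
  have h6 : (6:ℝ) ≤ 6 * B * L / R := by
    rw [le_div_iff₀ hR0]; nlinarith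
  have hA4 : Real.log 4 ≤ A := Real.log_le_log (by norm_num) (by linarith)
  have hA' : (1.386 : ℝ) ≤ A := by
    have h2 : (0.6931471803 : ℝ) < Real.log 2 := Real.log_two_gt_d9
    have h4 : Real.log 4 = 2 * Real.log 2 := by
      rw [show (4:ℝ) = 2^2 by norm_num, Real.log_pow]; push_cast; ring
    linarith
  have hA0 : (0:ℝ) ≤ A := by linarith
  have hsq : (0:ℝ) ≤ (q:ℝ) := by positivity
  set g : ℝ → ℝ := fun ε => Real.sqrt q * Real.sqrt A + Real.sqrt q * Real.sqrt R * ε ^ (-(1/2) : ℝ)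
    with hgdef
  have hint_rpow : IntegrableOn (fun ε : ℝ => ε ^ (-(1/2) : ℝ)) (Set.Ioo 0 R) volume := by
    have h1 : IntervalIntegrable (fun ε : ℝ => ε ^ (-(1/2) : ℝ)) volume 0 R :=
      intervalIntegral.intervalIntegrable_rpow' (by norm_num)
    rw [intervalIntegrable_iff_integrableOn_Ioc_of_le hR0.le] at h1
    exact h1.mono_set Set.Ioo_subset_Ioc_self
  have hgint : IntegrableOn g (Set.Ioo 0 R) volume := by
    apply Integrable.add
    · exact (integrableOn_const_iff).mpr (Or.inr (by rw [Real.volume_Ioo]; exact ENNReal.ofReal_lt_top))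
    · exact hint_rpow.const_mul _
  have hpt : ∀ ε ∈ Set.Ioo (0:ℝ) R, Real.sqrt (q * Real.log (6 * B * L / ε)) ≤ g ε := by
    intro ε hε
    obtain ⟨hε0, hεR⟩ := hε
    have hRe : 1 ≤ R / ε := (le_div_iff₀ hε0).mpr (by linarith)
    have hlogRe : 0 ≤ Real.log (R / ε) := Real.log_nonneg hRe
    have hsplit : Real.log (6 * B * L / ε) = A + Real.log (R / ε) := by
      rw [hAdef, ← Real.log_mul (by positivity) (by positivity)]
      congr 1
      field_simp
    rw [hsplit, Real.sqrt_mul hsq]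
    have h1 : Real.sqrt (A + Real.log (R / ε)) ≤ Real.sqrt A + Real.sqrt (Real.log (R/ε)) :=
      my_sqrt_add_le _ _ hA0 hlogRe
    have h2 : Real.sqrt (Real.log (R/ε)) ≤ Real.sqrt (R/ε) :=
      Real.sqrt_le_sqrt ((Real.log_le_sub_one_of_pos (by positivity)).trans (by linarith))
    have h3 : Real.sqrt (R/ε) = Real.sqrt R * ε ^ (-(1/2) : ℝ) := by
      rw [Real.sqrt_div hR0.le, div_eq_mul_inv]
      congr 1
      rw [Real.rpow_neg hε0.le, Real.sqrt_eq_rpow]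
    have hq0 : 0 ≤ Real.sqrt (q:ℝ) := Real.sqrt_nonneg _
    calc Real.sqrt q * Real.sqrt (A + Real.log (R/ε))
        ≤ Real.sqrt q * (Real.sqrt A + Real.sqrt R * ε ^ (-(1/2):ℝ)) := by
          apply mul_le_mul_of_nonneg_left _ hq0
          rw [← h3]; linarith
      _ = g ε := by rw [hgdef]; ring
  have hbound : (∫ ε in Set.Ioo (0 : ℝ) R, Real.sqrt (q * Real.log (6 * B * L / ε)))
      ≤ ∫ ε in Set.Ioo (0:ℝ) R, g ε := by
    apply integral_mono_of_nonneg
    · filter_upwards with ε using Real.sqrt_nonneg _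
    · exact hgint
    · filter_upwards [ae_restrict_mem measurableSet_Ioo] with ε hε using hpt ε hε
  have hgval : (∫ ε in Set.Ioo (0:ℝ) R, g ε) = Real.sqrt q * Real.sqrt A * R
      + Real.sqrt q * Real.sqrt R * (2 * Real.sqrt R) := by
    rw [hgdef, ← MeasureTheory.integral_Ioc_eq_integral_Ioo,
      ← intervalIntegral.integral_of_le hR0.le]
    rw [intervalIntegral.integral_add (intervalIntegrable_const)
      ((intervalIntegral.intervalIntegrable_rpow' (by norm_num)).const_mul _)]
    rw [intervalIntegral.integral_const, intervalIntegral.integral_const_mul,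
      integral_rpow (Or.inl (by norm_num))]
    rw [Real.zero_rpow (by norm_num)]
    rw [show (-(1/2) : ℝ) + 1 = 1/2 by norm_num, ← Real.sqrt_eq_rpow]
    simp
    ring
  have hRR : Real.sqrt R * Real.sqrt R = R := Real.mul_self_sqrt hR0.le
  have hsA : (1.17:ℝ) ≤ Real.sqrt A := by
    rw [show (1.17:ℝ) = Real.sqrt (1.17^2) from (Real.sqrt_sq (by norm_num)).symm]
    exact Real.sqrt_le_sqrt (by nlinarith)
  have hs2 : (1.414:ℝ) ≤ Real.sqrt 2 := by
    rw [show (1.414:ℝ) = Real.sqrt (1.414^2) from (Real.sqrt_sq (by norm_num)).symm]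
    exact Real.sqrt_le_sqrt (by norm_num)
  have key : Real.sqrt A + 2 ≤ 2 * Real.sqrt 2 * Real.sqrt A := by nlinarith [hsA, hs2]
  have e1 : Real.sqrt q * Real.sqrt R * (2 * Real.sqrt R) = 2 * (Real.sqrt q * R) := by
    linear_combination 2 * Real.sqrt (q:ℝ) * hRR
  have hfin : Real.sqrt q * Real.sqrt A * R + Real.sqrt q * Real.sqrt R * (2 * Real.sqrt R)
      ≤ 2 * Real.sqrt 2 * R * Real.sqrt q * Real.sqrt A := by
    rw [e1]
    nlinarith [mul_le_mul_of_nonneg_left key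
      (show (0:ℝ) ≤ Real.sqrt q * R by positivity)]
  calc (∫ ε in Set.Ioo (0 : ℝ) R, Real.sqrt (q * Real.log (6 * B * L / ε)))
      ≤ ∫ ε in Set.Ioo (0:ℝ) R, g ε := hbound
    _ = _ := hgval
    _ ≤ _ := hfin
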